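/- Let X1 = λ1·R1 + λ2·R2 + λ3·R3 + λ4·R4 and X2 = λ1·R1 + λ2·R2 + λ3·R3' + λ4·R4', where R1, R2, R3, R3', R4, R4' are independent standard exponentials and λ1, λ2, λ3, λ4 are distinct positive reals. If λ1 > max{λ2, λ3, λ4}, then lim_{y→∞} P(X1 > y, X2 > y) / P(X1 > y) exists and is strictly positive. -/

import Mathlib

open MeasureTheory ProbabilityTheory Filter

/-- `R` is a standard exponential random variable under `μ`:
its survival function is `exp (-y)` for `y ≥ 0` and `1` for `y < 0`. -/
def IsStdExp {Ω : Type*} [MeasurableSpace Ω] (μ : Measure Ω) (R : Ω → ℝ) : Prop :=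
  Measurable R ∧ ∀ y : ℝ, μ {ω | y < R ω} = ENNReal.ofReal (Real.exp (-(max y 0)))

open Set
open scoped ENNReal

namespace StdExpAux

variable {Ω : Type*} [MeasurableSpace Ω] {μ : Measure Ω}

lemma ae_nonneg [IsProbabilityMeasure μ] {R : Ω → ℝ} (hR : IsStdExp μ R) :
    ∀ᵐ ω ∂μ, 0 ≤ R ω := by
  have hle : ∀ y : ℝ, y < 0 → μ {ω | R ω ≤ y} = 0 := by
    intro y hy
    have h1 : μ {ω | y < R ω} = 1 := by
      rw [hR.2 y, max_eq_right hy.le, neg_zero, Real.exp_zero, ENNReal.ofReal_one]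
    have hms : MeasurableSet {ω | y < R ω} := measurableSet_lt measurable_const hR.1
    have := measure_compl hms (measure_ne_top μ _)
    rw [h1, measure_univ, tsub_self] at this
    have hcompl : {ω | y < R ω}ᶜ = {ω | R ω ≤ y} := by
      ext ω; simp [not_lt]
    rwa [hcompl] at this
  rw [ae_iff]
  have hsub : {ω | ¬ 0 ≤ R ω} ⊆ ⋃ n : ℕ, {ω | R ω ≤ -(1 / (n + 1))} := by
    intro ω hω
    simp only [Set.mem_setOf_eq, not_le] at hω
    obtain ⟨n, hn⟩ := exists_nat_one_div_lt (neg_pos.2 hω)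
    exact Set.mem_iUnion.2 ⟨n, by simp only [Set.mem_setOf_eq]; linarith⟩
  refine le_antisymm (le_trans (measure_mono hsub) ?_) zero_le
  refine le_trans (measure_iUnion_le _) ?_
  have hzero : ∀ n : ℕ, μ {ω | R ω ≤ -(1 / ((n:ℝ) + 1))} = 0 := by
    intro n
    refine hle _ ?_
    have : (0:ℝ) < 1 / ((n:ℝ) + 1) := by positivity
    linarith
  simp only [one_div] at hzero
  simp [hzero]

lemma moment [IsProbabilityMeasure μ] {R : Ω → ℝ} (hR : IsStdExp μ R) {c : ℝ}
    (hc0 : 0 < c) (hc1 : c < 1) : ∫⁻ ω, ENNReal.ofReal (Real.exp (c * R ω)) ∂μ ≠ ∞ := by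
  have hmeas : Measurable fun ω => Real.exp (c * R ω) :=
    Real.measurable_exp.comp (hR.1.const_mul c)
  rw [MeasureTheory.lintegral_eq_lintegral_meas_lt μ
    (ae_of_all _ fun ω => (Real.exp_pos _).le) hmeas.aemeasurable]
  have hset : ∀ᵐ t ∂(volume : Measure ℝ), t ∈ Ioi (0:ℝ) →
      μ {ω | t < Real.exp (c * R ω)} = ENNReal.ofReal (Real.exp (-(max (Real.log t / c) 0))) := by
    refine ae_of_all _ fun t ht => ?_
    have hsets : {ω | t < Real.exp (c * R ω)} = {ω | Real.log t / c < R ω} := by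
      ext ω
      simp only [Set.mem_setOf_eq]
      rw [div_lt_iff₀ hc0, mul_comm (R ω) c, ← Real.log_lt_iff_lt_exp ht]
    rw [hsets, hR.2]
  rw [setLIntegral_congr_fun_ae measurableSet_Ioi hset]
  rw [← Set.Ioc_union_Ioi_eq_Ioi (by norm_num : (0:ℝ) ≤ 1),
    lintegral_union measurableSet_Ioi (Set.Ioc_disjoint_Ioi le_rfl)]
  refine ENNReal.add_ne_top.2 ⟨?_, ?_⟩
  · have hb : ∫⁻ t in Set.Ioc (0:ℝ) 1, ENNReal.ofReal (Real.exp (-(max (Real.log t / c) 0))) ≤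
        ∫⁻ _ in Set.Ioc (0:ℝ) 1, 1 := by
      refine lintegral_mono fun t => ?_
      refine ENNReal.ofReal_le_one.2 ?_
      calc Real.exp (-(max (Real.log t / c) 0)) ≤ Real.exp 0 :=
            Real.exp_le_exp.2 (neg_nonpos.2 (le_max_right _ _))
        _ = 1 := Real.exp_zero
    refine ne_of_lt (lt_of_le_of_lt hb ?_)
    simp [Real.volume_Ioc]
  · have hcong : ∫⁻ t in Set.Ioi (1:ℝ), ENNReal.ofReal (Real.exp (-(max (Real.log t / c) 0))) =
        ∫⁻ t in Set.Ioi (1:ℝ), ENNReal.ofReal (t ^ (-c⁻¹)) := by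
      refine setLIntegral_congr_fun_ae measurableSet_Ioi (ae_of_all _ fun t ht => ?_)
      have ht1 : (1:ℝ) < t := ht
      have hlog : 0 ≤ Real.log t / c := div_nonneg (Real.log_nonneg ht1.le) hc0.le
      rw [max_eq_left hlog, Real.rpow_def_of_pos (lt_trans one_pos ht1)]
      congr 1
      field_simp
    rw [hcong]
    have hint : IntegrableOn (fun t : ℝ => t ^ (-c⁻¹)) (Set.Ioi 1) := by
      refine integrableOn_Ioi_rpow_of_lt ?_ one_pos
      have h1 : 1 < c⁻¹ := by
        rw [lt_inv_comm₀ one_pos hc0]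
        simpa using hc1
      linarith
    exact ne_of_lt hint.lintegral_lt_top

lemma key [IsProbabilityMeasure μ] {R V : Ω → ℝ} (hR : IsStdExp μ R) (hV : Measurable V)
    (hind : IndepFun R V μ) {a : ℝ} (ha : 0 < a)
    (hI : ∫⁻ ω, ENNReal.ofReal (Real.exp (V ω / a)) ∂μ ≠ ⊤) :
    Tendsto (fun y : ℝ => Real.exp (y / a) * (μ {ω | y < a * R ω + V ω}).toReal) atTop
      (nhds (∫⁻ ω, ENNReal.ofReal (Real.exp (V ω / a)) ∂μ).toReal) := by
  set I := ∫⁻ ω, ENNReal.ofReal (Real.exp (V ω / a)) ∂μ with hIdef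
  set G : ℝ → ℝ≥0∞ := fun y => ∫⁻ ω, ENNReal.ofReal (Real.exp (min (V ω) y / a)) ∂μ with hG
  have harith : ∀ v y : ℝ, y / a - max ((y - v) / a) 0 = min v y / a := by
    intro v y
    rcases le_total v y with h | h
    · rw [min_eq_left h, max_eq_left (div_nonneg (by linarith) ha.le)]
      field_simp
      ring
    · rw [min_eq_right h, max_eq_right (div_nonpos_of_nonpos_of_nonneg (by linarith) ha.le)]
      simp
  -- step 1: survival identity
  have step1 : ∀ y : ℝ, ENNReal.ofReal (Real.exp (y / a)) * μ {ω | y < a * R ω + V ω} = G y := by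
    intro y
    have hmS : MeasurableSet {p : ℝ × ℝ | (y - p.1) / a < p.2} :=
      measurableSet_lt ((measurable_const.sub measurable_fst).div_const a) measurable_snd
    have hset : {ω | y < a * R ω + V ω} = (fun ω => (V ω, R ω)) ⁻¹' {p : ℝ × ℝ | (y - p.1) / a < p.2} := by
      ext ω
      simp only [Set.mem_setOf_eq, Set.mem_preimage]
      rw [div_lt_iff₀ ha, mul_comm]
      exact sub_lt_iff_lt_add.symm
    have hmap : μ.map (fun ω => (V ω, R ω)) = (μ.map V).prod (μ.map R) :=
      (indepFun_iff_map_prod_eq_prod_map_map hV.aemeasurable hR.1.aemeasurable).1 hind.symm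
    have hsurv : μ {ω | y < a * R ω + V ω} =
        ∫⁻ ω, ENNReal.ofReal (Real.exp (-(max ((y - V ω) / a) 0))) ∂μ := by
      calc μ {ω | y < a * R ω + V ω}
          = μ.map (fun ω => (V ω, R ω)) {p : ℝ × ℝ | (y - p.1) / a < p.2} := by
            rw [Measure.map_apply (hV.prodMk hR.1) hmS, ← hset]
        _ = ((μ.map V).prod (μ.map R)) {p : ℝ × ℝ | (y - p.1) / a < p.2} := by rw [hmap]
        _ = ∫⁻ v, (μ.map R) (Prod.mk v ⁻¹' {p : ℝ × ℝ | (y - p.1) / a < p.2}) ∂(μ.map V) :=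
            Measure.prod_apply hmS
        _ = ∫⁻ v, ENNReal.ofReal (Real.exp (-(max ((y - v) / a) 0))) ∂(μ.map V) := by
            refine lintegral_congr fun v => ?_
            have hpre : Prod.mk v ⁻¹' {p : ℝ × ℝ | (y - p.1) / a < p.2} = {r : ℝ | (y - v) / a < r} := rfl
            have hIoi : {r : ℝ | (y - v) / a < r} = Set.Ioi ((y - v) / a) := rfl
            rw [hpre, hIoi, Measure.map_apply hR.1 measurableSet_Ioi]
            exact hR.2 _
        _ = ∫⁻ ω, ENNReal.ofReal (Real.exp (-(max ((y - V ω) / a) 0))) ∂μ := by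
            rw [lintegral_map (by fun_prop) hV]
    rw [hsurv, ← lintegral_const_mul _ (by fun_prop)]
    refine lintegral_congr fun ω => ?_
    rw [← ENNReal.ofReal_mul (Real.exp_nonneg _), ← Real.exp_add]
    rw [← sub_eq_add_neg, harith (V ω) y]
  have hmono : Monotone G := by
    intro y y' hyy'
    refine lintegral_mono fun ω => ENNReal.ofReal_le_ofReal (Real.exp_le_exp.2 ?_)
    exact (div_le_div_iff_of_pos_right ha).2 (min_le_min le_rfl hyy')
  have hle : ∀ y, G y ≤ I := by
    intro y
    refine lintegral_mono fun ω => ENNReal.ofReal_le_ofReal (Real.exp_le_exp.2 ?_)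
    exact (div_le_div_iff_of_pos_right ha).2 (min_le_left _ _)
  have hsup : ⨆ y : ℝ, G y = I := by
    refine le_antisymm (iSup_le hle) ?_
    have hseq : I = ⨆ n : ℕ, G (n : ℝ) := by
      rw [← lintegral_iSup (fun n => by fun_prop) ?mono]
      case mono =>
        intro n m hnm ω
        exact ENNReal.ofReal_le_ofReal (Real.exp_le_exp.2
          ((div_le_div_iff_of_pos_right ha).2 (min_le_min le_rfl (by exact_mod_cast hnm))))
      refine lintegral_congr fun ω => ?_
      refine le_antisymm ?_ (iSup_le fun n => ENNReal.ofReal_le_ofReal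
        (Real.exp_le_exp.2 ((div_le_div_iff_of_pos_right ha).2 (min_le_left _ _))))
      have hterm := le_iSup (fun n : ℕ => ENNReal.ofReal (Real.exp (min (V ω) (n : ℝ) / a))) ⌈V ω⌉₊
      rwa [min_eq_left (Nat.le_ceil _)] at hterm
    rw [hseq]
    exact iSup_le fun n => le_iSup G (n : ℝ)
  have hGtend : Tendsto G atTop (nhds I) := hsup ▸ tendsto_atTop_iSup hmono
  have htoReal : Tendsto (fun y => (G y).toReal) atTop (nhds I.toReal) :=
    (ENNReal.tendsto_toReal hI).comp hGtend
  refine htoReal.congr fun y => ?_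
  rw [← step1 y, ENNReal.toReal_mul, ENNReal.toReal_ofReal (Real.exp_nonneg _)]

end StdExpAux

/-- X1, X2 share R1 (index 0) and R2 (index 1). If λ1 dominates, the pair is
asymptotically dependent: the conditional tail ratio has a strictly positive limit. -/
theorem stmt_7 {Ω : Type*} [MeasurableSpace Ω] (μ : Measure Ω) [IsProbabilityMeasure μ]
    (R : Fin 6 → Ω → ℝ) (hR : ∀ i, IsStdExp μ (R i))
    (hind : iIndepFun R μ)
    (l1 l2 l3 l4 : ℝ) (hpos : 0 < l1 ∧ 0 < l2 ∧ 0 < l3 ∧ 0 < l4)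
    (hdist : l1 ≠ l2 ∧ l1 ≠ l3 ∧ l1 ≠ l4 ∧ l2 ≠ l3 ∧ l2 ≠ l4 ∧ l3 ≠ l4)
    (X1 X2 : Ω → ℝ)
    (hX1 : ∀ ω, X1 ω = l1 * R 0 ω + l2 * R 1 ω + l3 * R 2 ω + l4 * R 3 ω)
    (hX2 : ∀ ω, X2 ω = l1 * R 0 ω + l2 * R 1 ω + l3 * R 4 ω + l4 * R 5 ω)
    (hdom : max (max l2 l3) l4 < l1) :
    ∃ L : ℝ, 0 < L ∧
      Tendsto (fun y : ℝ =>
          (μ {ω | y < X1 ω ∧ y < X2 ω}).toReal / (μ {ω | y < X1 ω}).toReal)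
        atTop (nhds L) := by
  classical
  obtain ⟨hl1, hl2p, hl3p, hl4p⟩ := hpos
  have hRm : ∀ i, Measurable (R i) := fun i => (hR i).1
  have hl2 : l2 < l1 := lt_of_le_of_lt ((le_max_left l2 l3).trans (le_max_left _ l4)) hdom
  have hl3 : l3 < l1 := lt_of_le_of_lt ((le_max_right l2 l3).trans (le_max_left _ l4)) hdom
  have hl4 : l4 < l1 := lt_of_le_of_lt (le_max_right _ l4) hdom
  set V : Ω → ℝ := fun ω => l2 * R 1 ω + l3 * R 2 ω + l4 * R 3 ω with hVdef
  set W : Ω → ℝ := fun ω =>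
    l2 * R 1 ω + min (l3 * R 2 ω + l4 * R 3 ω) (l3 * R 4 ω + l4 * R 5 ω) with hWdef
  have hVm : Measurable V := by fun_prop
  have hWm : Measurable W := by
    apply Measurable.add (by fun_prop)
    exact Measurable.min (by fun_prop) (by fun_prop)
  -- set identities
  have hs1 : ∀ y : ℝ, {ω | y < X1 ω} = {ω | y < l1 * R 0 ω + V ω} := by
    intro y; ext ω
    simp only [Set.mem_setOf_eq, hX1 ω, hVdef]
    constructor <;> intro h <;> linarith
  have hs2 : ∀ y : ℝ, {ω | y < X1 ω ∧ y < X2 ω} = {ω | y < l1 * R 0 ω + W ω} := by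
    intro y; ext ω
    simp only [Set.mem_setOf_eq, hX1 ω, hX2 ω, hWdef]
    constructor
    · rintro ⟨h1, h2⟩
      rcases le_total (l3 * R 2 ω + l4 * R 3 ω) (l3 * R 4 ω + l4 * R 5 ω) with hc | hc
      · rw [min_eq_left hc]; linarith
      · rw [min_eq_right hc]; linarith
    · intro h
      have h1 := min_le_left (l3 * R 2 ω + l4 * R 3 ω) (l3 * R 4 ω + l4 * R 5 ω)
      have h2 := min_le_right (l3 * R 2 ω + l4 * R 3 ω) (l3 * R 4 ω + l4 * R 5 ω)
      constructor <;> linarith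
  -- independence of R 0 from V and W
  have hbase := hind.indepFun_finset {0} {1, 2, 3, 4, 5} (by decide) hRm
  have m0 : (0 : Fin 6) ∈ ({0} : Finset (Fin 6)) := by decide
  have m1 : (1 : Fin 6) ∈ ({1, 2, 3, 4, 5} : Finset (Fin 6)) := by decide
  have m2 : (2 : Fin 6) ∈ ({1, 2, 3, 4, 5} : Finset (Fin 6)) := by decide
  have m3 : (3 : Fin 6) ∈ ({1, 2, 3, 4, 5} : Finset (Fin 6)) := by decide
  have m4 : (4 : Fin 6) ∈ ({1, 2, 3, 4, 5} : Finset (Fin 6)) := by decide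
  have m5 : (5 : Fin 6) ∈ ({1, 2, 3, 4, 5} : Finset (Fin 6)) := by decide
  have hind1 : IndepFun (R 0) V μ := by
    have := hbase.comp (_mγ := inferInstance) (φ := fun v : ({0} : Finset (Fin 6)) → ℝ => v ⟨0, m0⟩)
      (ψ := fun v : ({1, 2, 3, 4, 5} : Finset (Fin 6)) → ℝ =>
        l2 * v ⟨1, m1⟩ + l3 * v ⟨2, m2⟩ + l4 * v ⟨3, m3⟩)
      (by fun_prop) (by fun_prop)
    exact this
  have hind2 : IndepFun (R 0) W μ := by
    have := hbase.comp (_mγ := inferInstance) (φ := fun v : ({0} : Finset (Fin 6)) → ℝ => v ⟨0, m0⟩)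
      (ψ := fun v : ({1, 2, 3, 4, 5} : Finset (Fin 6)) → ℝ =>
        l2 * v ⟨1, m1⟩ + min (l3 * v ⟨2, m2⟩ + l4 * v ⟨3, m3⟩)
          (l3 * v ⟨4, m4⟩ + l4 * v ⟨5, m5⟩))
      (by fun_prop)
      (by
        apply Measurable.add
        · fun_prop
        · exact Measurable.min (by fun_prop) (by fun_prop))
    exact this
  -- finiteness of I1
  set I1 := ∫⁻ ω, ENNReal.ofReal (Real.exp (V ω / l1)) ∂μ with hI1def
  set I2 := ∫⁻ ω, ENNReal.ofReal (Real.exp (W ω / l1)) ∂μ with hI2def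
  have hfactor : ∀ ω, ENNReal.ofReal (Real.exp (V ω / l1)) =
      ENNReal.ofReal (Real.exp (l2 / l1 * R 1 ω)) *
        (ENNReal.ofReal (Real.exp (l3 / l1 * R 2 ω)) *
          ENNReal.ofReal (Real.exp (l4 / l1 * R 3 ω))) := by
    intro ω
    rw [← ENNReal.ofReal_mul (Real.exp_nonneg _), ← ENNReal.ofReal_mul (Real.exp_nonneg _),
      ← Real.exp_add, ← Real.exp_add]
    congr 2
    field_simp
    ring
  have hI1ne : I1 ≠ ⊤ := by
    have hc2 : 0 < l2 / l1 := div_pos hl2p hl1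
    have hc2' : l2 / l1 < 1 := (div_lt_one hl1).2 hl2
    have hc3 : 0 < l3 / l1 := div_pos hl3p hl1
    have hc3' : l3 / l1 < 1 := (div_lt_one hl1).2 hl3
    have hc4 : 0 < l4 / l1 := div_pos hl4p hl1
    have hc4' : l4 / l1 < 1 := (div_lt_one hl1).2 hl4
    have hi23 : IndepFun (fun ω => ENNReal.ofReal (Real.exp (l3 / l1 * R 2 ω)))
        (fun ω => ENNReal.ofReal (Real.exp (l4 / l1 * R 3 ω))) μ := by
      have := (hind.indepFun (show (2 : Fin 6) ≠ 3 by decide)).comp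
        (φ := fun x : ℝ => ENNReal.ofReal (Real.exp (l3 / l1 * x)))
        (ψ := fun x : ℝ => ENNReal.ofReal (Real.exp (l4 / l1 * x)))
        (by fun_prop) (by fun_prop)
      exact this
    have hi1 : IndepFun (fun ω => ENNReal.ofReal (Real.exp (l2 / l1 * R 1 ω)))
        (fun ω => ENNReal.ofReal (Real.exp (l3 / l1 * R 2 ω)) *
          ENNReal.ofReal (Real.exp (l4 / l1 * R 3 ω))) μ := by
      have hpair : IndepFun (R 1) (fun ω => (R 2 ω, R 3 ω)) μ :=
        (hind.indepFun_prodMk hRm 2 3 1 (by decide) (by decide)).symm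
      have := hpair.comp (φ := fun x : ℝ => ENNReal.ofReal (Real.exp (l2 / l1 * x)))
        (ψ := fun p : ℝ × ℝ => ENNReal.ofReal (Real.exp (l3 / l1 * p.1)) *
          ENNReal.ofReal (Real.exp (l4 / l1 * p.2)))
        (by fun_prop) (by fun_prop)
      exact this
    have heq : I1 = (∫⁻ ω, ENNReal.ofReal (Real.exp (l2 / l1 * R 1 ω)) ∂μ) *
        ((∫⁻ ω, ENNReal.ofReal (Real.exp (l3 / l1 * R 2 ω)) ∂μ) *
          ∫⁻ ω, ENNReal.ofReal (Real.exp (l4 / l1 * R 3 ω)) ∂μ) := by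
      rw [hI1def]
      calc ∫⁻ ω, ENNReal.ofReal (Real.exp (V ω / l1)) ∂μ
          = ∫⁻ ω, ((fun ω => ENNReal.ofReal (Real.exp (l2 / l1 * R 1 ω))) *
              (fun ω => ENNReal.ofReal (Real.exp (l3 / l1 * R 2 ω)) *
                ENNReal.ofReal (Real.exp (l4 / l1 * R 3 ω)))) ω ∂μ :=
            lintegral_congr fun ω => hfactor ω
        _ = (∫⁻ ω, ENNReal.ofReal (Real.exp (l2 / l1 * R 1 ω)) ∂μ) *
              ∫⁻ ω, ENNReal.ofReal (Real.exp (l3 / l1 * R 2 ω)) *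
                ENNReal.ofReal (Real.exp (l4 / l1 * R 3 ω)) ∂μ :=
            lintegral_mul_eq_lintegral_mul_lintegral_of_indepFun (by fun_prop) (by fun_prop) hi1
        _ = (∫⁻ ω, ENNReal.ofReal (Real.exp (l2 / l1 * R 1 ω)) ∂μ) *
              ((∫⁻ ω, ENNReal.ofReal (Real.exp (l3 / l1 * R 2 ω)) ∂μ) *
                ∫⁻ ω, ENNReal.ofReal (Real.exp (l4 / l1 * R 3 ω)) ∂μ) := by
            congr 1
            exact lintegral_mul_eq_lintegral_mul_lintegral_of_indepFun (by fun_prop) (by fun_prop) hi23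
    rw [heq]
    exact ENNReal.mul_ne_top (StdExpAux.moment (hR 1) hc2 hc2')
      (ENNReal.mul_ne_top (StdExpAux.moment (hR 2) hc3 hc3') (StdExpAux.moment (hR 3) hc4 hc4'))
  have hI2le : I2 ≤ I1 := by
    refine lintegral_mono fun ω => ENNReal.ofReal_le_ofReal (Real.exp_le_exp.2 ?_)
    refine (div_le_div_iff_of_pos_right hl1).2 ?_
    have hmin := min_le_left (l3 * R 2 ω + l4 * R 3 ω) (l3 * R 4 ω + l4 * R 5 ω)
    simp only [hWdef, hVdef]
    linarith
  have hI2ne : I2 ≠ ⊤ := ne_top_of_le_ne_top hI1ne hI2le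
  have hone : (1 : ℝ≥0∞) ≤ I2 := by
    have hae : ∀ᵐ ω ∂μ, (1 : ℝ≥0∞) ≤ ENNReal.ofReal (Real.exp (W ω / l1)) := by
      filter_upwards [StdExpAux.ae_nonneg (hR 1), StdExpAux.ae_nonneg (hR 2),
        StdExpAux.ae_nonneg (hR 3), StdExpAux.ae_nonneg (hR 4), StdExpAux.ae_nonneg (hR 5)]
        with ω h1 h2 h3 h4 h5
      have hmin : 0 ≤ min (l3 * R 2 ω + l4 * R 3 ω) (l3 * R 4 ω + l4 * R 5 ω) :=
        le_min (by positivity) (by positivity)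
      have hl2R : 0 ≤ l2 * R 1 ω := by positivity
      have hW0 : 0 ≤ W ω := by simp only [hWdef]; linarith
      rw [show (1 : ℝ≥0∞) = ENNReal.ofReal 1 by simp]
      exact ENNReal.ofReal_le_ofReal (Real.one_le_exp (div_nonneg hW0 hl1.le))
    calc (1 : ℝ≥0∞) = ∫⁻ _, 1 ∂μ := by simp
      _ ≤ I2 := lintegral_mono_ae hae
  have T1 := StdExpAux.key (hR 0) hVm hind1 hl1 hI1ne
  have T2 := StdExpAux.key (hR 0) hWm hind2 hl1 hI2ne
  have hI1r : (1 : ℝ) ≤ I1.toReal := by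
    rw [← ENNReal.toReal_one]
    exact ENNReal.toReal_mono hI1ne (le_trans hone hI2le)
  have hI2r : (1 : ℝ) ≤ I2.toReal := by
    rw [← ENNReal.toReal_one]
    exact ENNReal.toReal_mono hI2ne hone
  refine ⟨I2.toReal / I1.toReal, div_pos (by linarith) (by linarith), ?_⟩
  have hT := T2.div T1 (ne_of_gt (by linarith : (0 : ℝ) < I1.toReal))
  refine hT.congr fun y => ?_
  rw [hs1 y, hs2 y]
  exact mul_div_mul_left _ _ (Real.exp_ne_zero _)
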